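/- Let H be a free pro-2 group on generators including w_{01}, w_{02}, w_i, let Γ = ⟨γ⟩ ≅ Z_2, let Φ : Z_2[[H]] → Λ = Z_2[[T]] be induced by w_{01}, w_{02} ↦ γ = 1+T and w_i ↦ 1. Then, modulo the ideal (2,T)^3 of Λ: Φ(∂(w_{01} w_i w_{02}^{-1} w_i^{-1})/∂w) ≡ δ_{w,w_{01}} − δ_{w,w_{02}} + T·δ_{w,w_i}, and Φ(∂([w_i w_{02} w_i^{-1}, w_{01}])/∂w) ≡ T·δ_{w,w_{01}} − T·δ_{w,w_{02}} + T^2·δ_{w,w_i}, for w ranging over the generators. -/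

import Mathlib

/-!  Pro-2 Fox derivative machinery, composed with the map `Φ` to `Λ = ℤ₂[[T]]`.
The free group on generators indexed by `Fin m` plays the role of the free pro-2
group `H̄` on `w₀₁, w₀₂, w₁, …`; the generators with index `0` and `1` are `w₀₁`
and `w₀₂` (mapping to the generator `γ = 1 + T` of `Γ ≅ ℤ₂ ⊆ Λˣ`), all other
generators map to `1`.  `foxD w y` is `Φ(∂y/∂x_w)`. -/

noncomputable section

/-- The unit `1 + T` of `Λ = ℤ₂[[T]]`. -/
def oneAddX : (PowerSeries ℤ_[2])ˣ :=
  Units.mkOfMulEqOne (1 + PowerSeries.X)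
    ((1 + PowerSeries.X : PowerSeries ℤ_[2]).invOfUnit 1)
    (PowerSeries.mul_invOfUnit _ _ (by simp))

/-- `Φ` on a positive generator. -/
def genVal {m : ℕ} (j : Fin m) : PowerSeries ℤ_[2] :=
  if (j : ℕ) = 0 ∨ (j : ℕ) = 1 then (oneAddX : PowerSeries ℤ_[2]) else 1

/-- `Φ` on the inverse of a generator. -/
def genInvVal {m : ℕ} (j : Fin m) : PowerSeries ℤ_[2] :=
  if (j : ℕ) = 0 ∨ (j : ℕ) = 1 then ((oneAddX⁻¹ : (PowerSeries ℤ_[2])ˣ) : PowerSeries ℤ_[2]) else 1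

/-- `Φ ∘ (∂/∂x_w)` on a word, by the Fox product rule. -/
def foxWord {m : ℕ} (w : Fin m) : List (Fin m × Bool) → PowerSeries ℤ_[2]
  | [] => 0
  | (a, true) :: l => (if a = w then 1 else 0) + genVal a * foxWord w l
  | (a, false) :: l => (if a = w then -genInvVal a else 0) + genInvVal a * foxWord w l

/-- The pro-2 Fox derivative composed with `Φ`: `foxD w y = Φ(∂y/∂x_w) ∈ Λ`. -/
def foxD {m : ℕ} (w : Fin m) (y : FreeGroup (Fin m)) : PowerSeries ℤ_[2] :=
  foxWord w y.toWord

/-- The homomorphism `Φ` restricted to the group: `H̄ → Γ ⊆ Λˣ`, `w₀₁, w₀₂ ↦ 1 + T`,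
`wᵢ ↦ 1`; its kernel is `M̄`. -/
def phiHom {m : ℕ} : FreeGroup (Fin m) →* (PowerSeries ℤ_[2])ˣ :=
  FreeGroup.lift fun j => if (j : ℕ) = 0 ∨ (j : ℕ) = 1 then oneAddX else 1

end

open scoped commutatorElement in
open PowerSeries in
/-- explicit Fox derivative computations modulo `(2,T)³` in
`Λ = ℤ₂[[T]]`: writing `w₀₁, w₀₂` for the generators of index `0, 1` and `wᵢ` for a
generator of index `i ∉ {0,1}`,
`Φ(∂(w₀₁ wᵢ w₀₂⁻¹ wᵢ⁻¹)/∂w) ≡ δ_{w,w₀₁} − δ_{w,w₀₂} + T·δ_{w,wᵢ}` and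
`Φ(∂[wᵢ w₀₂ wᵢ⁻¹, w₀₁]/∂w) ≡ T·δ_{w,w₀₁} − T·δ_{w,w₀₂} + T²·δ_{w,wᵢ}`
for every generator `w`. -/
theorem stmt_17 {m : ℕ} (w01 w02 wi : Fin m)
    (h0 : (w01 : ℕ) = 0) (h1 : (w02 : ℕ) = 1)
    (hi0 : (wi : ℕ) ≠ 0) (hi1 : (wi : ℕ) ≠ 1) (w : Fin m) :
    foxD w (FreeGroup.of w01 * FreeGroup.of wi *
        (FreeGroup.of w02)⁻¹ * (FreeGroup.of wi)⁻¹) -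
      ((if w = w01 then 1 else 0) - (if w = w02 then 1 else 0) +
        X * (if w = wi then 1 else 0)) ∈
      (Ideal.span {(2 : PowerSeries ℤ_[2]), X}) ^ 3 ∧
    foxD w ⁅FreeGroup.of wi * FreeGroup.of w02 * (FreeGroup.of wi)⁻¹,
        FreeGroup.of w01⁆ -
      (X * (if w = w01 then 1 else 0) - X * (if w = w02 then 1 else 0) +
        X ^ 2 * (if w = wi then 1 else 0)) ∈
      (Ideal.span {(2 : PowerSeries ℤ_[2]), X}) ^ 3 := by
  
  have h01i : w01 ≠ wi := fun h => hi0 (h ▸ h0)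
  have h02i : w02 ≠ wi := fun h => hi1 (h ▸ h1)
  have h0102 : w01 ≠ w02 := fun h => by rw [h, h1] at h0; exact one_ne_zero h0
  have e1 : (FreeGroup.of w01 * FreeGroup.of wi *
      (FreeGroup.of w02)⁻¹ * (FreeGroup.of wi)⁻¹).toWord
      = [(w01,true),(wi,true),(w02,false),(wi,false)] := by
    simp [FreeGroup.of, FreeGroup.mul_mk, FreeGroup.inv_mk, FreeGroup.invRev,
      FreeGroup.toWord_mk, FreeGroup.reduce, h01i, h02i, h01i.symm, h02i.symm]
  have e2 : (⁅FreeGroup.of wi * FreeGroup.of w02 * (FreeGroup.of wi)⁻¹,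
      FreeGroup.of w01⁆ : FreeGroup (Fin m)).toWord
      = [(wi,true),(w02,true),(wi,false),(w01,true),
         (wi,true),(w02,false),(wi,false),(w01,false)] := by
    simp [commutatorElement_def, FreeGroup.of, FreeGroup.mul_mk, FreeGroup.inv_mk,
      FreeGroup.invRev, FreeGroup.toWord_mk, FreeGroup.reduce,
      h01i, h02i, h0102, h01i.symm, h02i.symm, h0102.symm]
  have hg01 : genVal w01 = (oneAddX : PowerSeries ℤ_[2]) := by simp [genVal, h0]
  have hg02 : genVal w02 = (oneAddX : PowerSeries ℤ_[2]) := by simp [genVal, h1]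
  have hgi : genVal wi = 1 := by simp [genVal, hi0, hi1]
  have hgi' : genInvVal wi = 1 := by simp [genInvVal, hi0, hi1]
  have hg01' : genInvVal w01 = ((oneAddX⁻¹ : (PowerSeries ℤ_[2])ˣ) : PowerSeries ℤ_[2]) := by
    simp [genInvVal, h0]
  have hg02' : genInvVal w02 = ((oneAddX⁻¹ : (PowerSeries ℤ_[2])ˣ) : PowerSeries ℤ_[2]) := by
    simp [genInvVal, h1]
  have huv : ((1 + X : PowerSeries ℤ_[2])) * ((oneAddX⁻¹ : (PowerSeries ℤ_[2])ˣ) : PowerSeries ℤ_[2]) = 1 :=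
    Units.mul_inv _
  have hu : (oneAddX : PowerSeries ℤ_[2]) = 1 + X := rfl
  rw [hu] at hg01 hg02
  constructor
  · rw [foxD, e1]
    simp only [foxWord, hg01, hg02, hgi, hgi', hg01', hg02', hu]
    rcases eq_or_ne w w01 with h|h
    · subst h
      simp only [if_pos rfl, if_neg (Ne.symm h01i), if_neg h0102, if_neg h01i,
        if_neg (Ne.symm h0102)]
      convert zero_mem ((Ideal.span {(2:PowerSeries ℤ_[2]), X})^3) using 1
      try simp only [reduceIte]
      first
      | ring1
      | linear_combination huv
      | linear_combination -huv
      | linear_combination (-(1:PowerSeries ℤ_[2]) - X) * huv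
      | linear_combination ((1:PowerSeries ℤ_[2]) + X) * huv
      | linear_combination (-(1 + X) * ((oneAddX⁻¹ : (PowerSeries ℤ_[2])ˣ) : PowerSeries ℤ_[2]) - 1) * huv
      | linear_combination ((1 + X) * ((oneAddX⁻¹ : (PowerSeries ℤ_[2])ˣ) : PowerSeries ℤ_[2]) + 1) * huv
    · rcases eq_or_ne w w02 with h'|h'
      · subst h'
        simp only [if_pos rfl, if_neg (Ne.symm h02i), if_neg (Ne.symm h0102),
          if_neg h02i, if_neg h0102, if_neg h]
        convert zero_mem ((Ideal.span {(2:PowerSeries ℤ_[2]), X})^3) using 1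
        try simp only [reduceIte]
        first
        | ring1
        | linear_combination huv
        | linear_combination -huv
        | linear_combination (-(1:PowerSeries ℤ_[2]) - X) * huv
        | linear_combination ((1:PowerSeries ℤ_[2]) + X) * huv
        | linear_combination (-(1 + X) * ((oneAddX⁻¹ : (PowerSeries ℤ_[2])ˣ) : PowerSeries ℤ_[2]) - 1) * huv
        | linear_combination ((1 + X) * ((oneAddX⁻¹ : (PowerSeries ℤ_[2])ˣ) : PowerSeries ℤ_[2]) + 1) * huv
      · rcases eq_or_ne w wi with h''|h''
        · subst h''
          simp only [if_pos rfl, if_neg h, if_neg h', if_neg (Ne.symm h),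
            if_neg (Ne.symm h')]
          convert zero_mem ((Ideal.span {(2:PowerSeries ℤ_[2]), X})^3) using 1
          try simp only [reduceIte]
          first
          | ring1
          | linear_combination huv
          | linear_combination -huv
          | linear_combination (-(1:PowerSeries ℤ_[2]) - X) * huv
          | linear_combination ((1:PowerSeries ℤ_[2]) + X) * huv
          | linear_combination (-(1 + X) * ((oneAddX⁻¹ : (PowerSeries ℤ_[2])ˣ) : PowerSeries ℤ_[2]) - 1) * huv
          | linear_combination ((1 + X) * ((oneAddX⁻¹ : (PowerSeries ℤ_[2])ˣ) : PowerSeries ℤ_[2]) + 1) * huv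
        · simp only [if_neg h, if_neg h', if_neg h'', if_neg (Ne.symm h),
            if_neg (Ne.symm h'), if_neg (Ne.symm h'')]
          convert zero_mem ((Ideal.span {(2:PowerSeries ℤ_[2]), X})^3) using 1
          try simp only [reduceIte]
          first
          | ring1
          | linear_combination huv
          | linear_combination -huv
          | linear_combination (-(1:PowerSeries ℤ_[2]) - X) * huv
          | linear_combination ((1:PowerSeries ℤ_[2]) + X) * huv
          | linear_combination (-(1 + X) * ((oneAddX⁻¹ : (PowerSeries ℤ_[2])ˣ) : PowerSeries ℤ_[2]) - 1) * huv
          | linear_combination ((1 + X) * ((oneAddX⁻¹ : (PowerSeries ℤ_[2])ˣ) : PowerSeries ℤ_[2]) + 1) * huv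
  · rw [foxD, e2]
    simp only [foxWord, hg01, hg02, hgi, hgi', hg01', hg02', hu]
    rcases eq_or_ne w w01 with h|h
    · subst h
      simp only [if_pos rfl, if_neg (Ne.symm h01i), if_neg h0102, if_neg h01i,
        if_neg (Ne.symm h0102)]
      convert zero_mem ((Ideal.span {(2:PowerSeries ℤ_[2]), X})^3) using 1
      try simp only [reduceIte]
      first
      | ring1
      | linear_combination huv
      | linear_combination -huv
      | linear_combination (-(1:PowerSeries ℤ_[2]) - X) * huv
      | linear_combination ((1:PowerSeries ℤ_[2]) + X) * huv
      | linear_combination (-(1 + X) * ((oneAddX⁻¹ : (PowerSeries ℤ_[2])ˣ) : PowerSeries ℤ_[2]) - 1) * huv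
      | linear_combination ((1 + X) * ((oneAddX⁻¹ : (PowerSeries ℤ_[2])ˣ) : PowerSeries ℤ_[2]) + 1) * huv
    · rcases eq_or_ne w w02 with h'|h'
      · subst h'
        simp only [if_pos rfl, if_neg (Ne.symm h02i), if_neg (Ne.symm h0102),
          if_neg h02i, if_neg h0102, if_neg h]
        convert zero_mem ((Ideal.span {(2:PowerSeries ℤ_[2]), X})^3) using 1
        try simp only [reduceIte]
        first
        | ring1
        | linear_combination huv
        | linear_combination -huv
        | linear_combination (-(1:PowerSeries ℤ_[2]) - X) * huv
        | linear_combination ((1:PowerSeries ℤ_[2]) + X) * huv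
        | linear_combination (-(1 + X) * ((oneAddX⁻¹ : (PowerSeries ℤ_[2])ˣ) : PowerSeries ℤ_[2]) - 1) * huv
        | linear_combination ((1 + X) * ((oneAddX⁻¹ : (PowerSeries ℤ_[2])ˣ) : PowerSeries ℤ_[2]) + 1) * huv
      · rcases eq_or_ne w wi with h''|h''
        · subst h''
          simp only [if_pos rfl, if_neg h, if_neg h', if_neg (Ne.symm h),
            if_neg (Ne.symm h')]
          convert zero_mem ((Ideal.span {(2:PowerSeries ℤ_[2]), X})^3) using 1
          try simp only [reduceIte]
          first
          | ring1
          | linear_combination huv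
          | linear_combination -huv
          | linear_combination (-(1:PowerSeries ℤ_[2]) - X) * huv
          | linear_combination ((1:PowerSeries ℤ_[2]) + X) * huv
          | linear_combination (-(1 + X) * ((oneAddX⁻¹ : (PowerSeries ℤ_[2])ˣ) : PowerSeries ℤ_[2]) - 1) * huv
          | linear_combination ((1 + X) * ((oneAddX⁻¹ : (PowerSeries ℤ_[2])ˣ) : PowerSeries ℤ_[2]) + 1) * huv
        · simp only [if_neg h, if_neg h', if_neg h'', if_neg (Ne.symm h),
            if_neg (Ne.symm h'), if_neg (Ne.symm h'')]
          convert zero_mem ((Ideal.span {(2:PowerSeries ℤ_[2]), X})^3) using 1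
          try simp only [reduceIte]
          first
          | ring1
          | linear_combination huv
          | linear_combination -huv
          | linear_combination (-(1:PowerSeries ℤ_[2]) - X) * huv
          | linear_combination ((1:PowerSeries ℤ_[2]) + X) * huv
          | linear_combination (-(1 + X) * ((oneAddX⁻¹ : (PowerSeries ℤ_[2])ˣ) : PowerSeries ℤ_[2]) - 1) * huv
          | linear_combination ((1 + X) * ((oneAddX⁻¹ : (PowerSeries ℤ_[2])ˣ) : PowerSeries ℤ_[2]) + 1) * huv
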